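/- For all n, m ≥ 1, the following are equivalent: (1) a finite system of non-commutative polynomial equations over ℕ (in any number of variables) is solvable in M_n(ℕ) if and only if it is solvable in M_m(ℕ); (2) n = m. -/

import Mathlib

open Matrix in
lemma sum_std_diag_eq_one (k : ℕ) :
    (∑ i : Fin k, Matrix.single i i (1 : ℕ)) = 1 := by
  ext p q
  rw [Matrix.sum_apply]
  by_cases h : p = q
  · subst h
    rw [Matrix.one_apply_eq, Finset.sum_eq_single p
      (fun i _ hip => Matrix.single_apply_of_ne _ _ _ _ _ (by tauto))
      (by simp)]
    simp
  · rw [Matrix.one_apply_ne h, Finset.sum_eq_zero]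
    intro i _
    exact Matrix.single_apply_of_ne _ _ _ _ _ (by rintro ⟨rfl, rfl⟩; exact h rfl)


open Matrix Kronecker in
def Amat (k t : ℕ) (hk : 0 < k) (i : Fin k) : Matrix (Fin t × Fin k) (Fin t × Fin k) ℕ :=
  (1 : Matrix (Fin t) (Fin t) ℕ) ⊗ₖ Matrix.single i ⟨0, hk⟩ (1 : ℕ)

open Matrix Kronecker in
def Bmat (k t : ℕ) (hk : 0 < k) (i : Fin k) : Matrix (Fin t × Fin k) (Fin t × Fin k) ℕ :=
  (1 : Matrix (Fin t) (Fin t) ℕ) ⊗ₖ Matrix.single ⟨0, hk⟩ i (1 : ℕ)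

open Matrix Kronecker in
lemma Amat_mul_Bmat (k t : ℕ) (hk : 0 < k) (i : Fin k) :
    Amat k t hk i * Bmat k t hk i
      = (1 : Matrix (Fin t) (Fin t) ℕ) ⊗ₖ Matrix.single i i (1 : ℕ) := by
  rw [Amat, Bmat, ← Matrix.mul_kronecker_mul, Matrix.single_mul_single_same, one_mul, one_mul]

open Matrix Kronecker in
lemma Bmat_mul_Amat (k t : ℕ) (hk : 0 < k) (i : Fin k) :
    Bmat k t hk i * Amat k t hk i
      = (1 : Matrix (Fin t) (Fin t) ℕ) ⊗ₖ Matrix.single ⟨0, hk⟩ ⟨0, hk⟩ (1 : ℕ) := by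
  rw [Amat, Bmat, ← Matrix.mul_kronecker_mul, Matrix.single_mul_single_same, one_mul, one_mul]

open Matrix Kronecker in
lemma key (k d : ℕ) (hk : 0 < k) (hd : 0 < d) :
    (∃ A B : Fin k → Matrix (Fin d) (Fin d) ℕ,
       (∑ i, A i * B i) = 1 ∧ ∀ i, B i * A i = B ⟨0, hk⟩ * A ⟨0, hk⟩) ↔ k ∣ d := by
  constructor
  · rintro ⟨A, B, hsum, heq⟩
    have htr : (d : ℕ) = ∑ i : Fin k, Matrix.trace (A i * B i) := by
      rw [← Matrix.trace_sum, hsum, Matrix.trace_one]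
      simp
    have h2 : ∑ i : Fin k, Matrix.trace (A i * B i)
        = k * Matrix.trace (B ⟨0, hk⟩ * A ⟨0, hk⟩) := by
      calc ∑ i : Fin k, Matrix.trace (A i * B i)
          = ∑ _i : Fin k, Matrix.trace (B ⟨0, hk⟩ * A ⟨0, hk⟩) :=
            Finset.sum_congr rfl (fun i _ => by rw [Matrix.trace_mul_comm, heq i])
        _ = k * Matrix.trace (B ⟨0, hk⟩ * A ⟨0, hk⟩) := by
            simp [Finset.sum_const, mul_comm]
    exact ⟨_, htr.trans h2⟩
  · rintro ⟨t, rfl⟩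
    let e : Fin t × Fin k ≃ Fin (k * t) := (finProdFinEquiv : Fin t × Fin k ≃ Fin (t * k)).trans
      (finCongr (mul_comm t k))
    let φ : Matrix (Fin t × Fin k) (Fin t × Fin k) ℕ ≃ₐ[ℕ] Matrix (Fin (k*t)) (Fin (k*t)) ℕ :=
      Matrix.reindexAlgEquiv ℕ ℕ e
    refine ⟨fun i => φ (Amat k t hk i), fun i => φ (Bmat k t hk i), ?_, ?_⟩
    · show ∑ i : Fin k, φ (Amat k t hk i) * φ (Bmat k t hk i) = 1
      have h1 : ∑ i : Fin k, φ (Amat k t hk i) * φ (Bmat k t hk i)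
          = φ (∑ i, Amat k t hk i * Bmat k t hk i) := by
        rw [map_sum]
        exact Finset.sum_congr rfl (fun i _ => (_root_.map_mul φ _ _).symm)
      rw [h1]
      have hone : (∑ i : Fin k, Amat k t hk i * Bmat k t hk i) = 1 := by
        simp only [Amat_mul_Bmat]
        have hsum : ∑ i : Fin k, (1 : Matrix (Fin t) (Fin t) ℕ) ⊗ₖ Matrix.single i i (1 : ℕ)
            = (1 : Matrix (Fin t) (Fin t) ℕ) ⊗ₖ (∑ i : Fin k, Matrix.single i i (1 : ℕ)) := by
          ext p q
          simp [Matrix.sum_apply, Matrix.kroneckerMap_apply, Finset.mul_sum]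
        rw [hsum, sum_std_diag_eq_one, Matrix.one_kronecker_one]
      rw [hone, _root_.map_one]
    · intro i
      show φ (Bmat k t hk i) * φ (Amat k t hk i)
          = φ (Bmat k t hk ⟨0, hk⟩) * φ (Amat k t hk ⟨0, hk⟩)
      rw [← _root_.map_mul, ← _root_.map_mul, Bmat_mul_Amat, Bmat_mul_Amat]

noncomputable def Psys (k : ℕ) : Fin (k+1) → FreeAlgebra ℕ (Fin (k+k)) :=
  Fin.cases
    (∑ i : Fin k, FreeAlgebra.ι ℕ (Fin.castAdd k i) * FreeAlgebra.ι ℕ (Fin.natAdd k i))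
    (fun i => FreeAlgebra.ι ℕ (Fin.natAdd k i) * FreeAlgebra.ι ℕ (Fin.castAdd k i))

noncomputable def Qsys (k : ℕ) (hk : 0 < k) : Fin (k+1) → FreeAlgebra ℕ (Fin (k+k)) :=
  Fin.cases 1
    (fun _ => FreeAlgebra.ι ℕ (Fin.natAdd k ⟨0, hk⟩) * FreeAlgebra.ι ℕ (Fin.castAdd k ⟨0, hk⟩))

lemma system_iff (k d : ℕ) (hk : 0 < k) (hd : 0 < d) :
    (∃ X : Fin (k+k) → Matrix (Fin d) (Fin d) ℕ,
      ∀ j : Fin (k+1), FreeAlgebra.lift ℕ X (Psys k j) = FreeAlgebra.lift ℕ X (Qsys k hk j))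
    ↔ k ∣ d := by
  rw [← key k d hk hd]
  constructor
  · rintro ⟨X, hX⟩
    refine ⟨fun i => X (Fin.castAdd k i), fun i => X (Fin.natAdd k i), ?_, ?_⟩
    · have h0 := hX 0
      simpa [Psys, Qsys, map_sum, map_mul, FreeAlgebra.lift_ι_apply, map_one] using h0
    · intro i
      have hi := hX i.succ
      simpa [Psys, Qsys, Fin.cases_succ, map_mul, FreeAlgebra.lift_ι_apply] using hi
  · rintro ⟨A, B, h1, h2⟩
    refine ⟨fun j => if h : (j : ℕ) < k then A ⟨j, h⟩ else B ⟨(j : ℕ) - k, by omega⟩, fun j => ?_⟩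
    set X : Fin (k+k) → Matrix (Fin d) (Fin d) ℕ :=
      fun j => if h : (j : ℕ) < k then A ⟨j, h⟩ else B ⟨(j : ℕ) - k, by omega⟩ with hXdef
    have hL : ∀ i : Fin k, X (Fin.castAdd k i) = A i := by
      intro i
      rw [hXdef]
      simp only [Fin.coe_castAdd]
      rw [dif_pos i.isLt]
    have hR : ∀ i : Fin k, X (Fin.natAdd k i) = B i := by
      intro i
      rw [hXdef]
      beta_reduce
      have hnot : ¬((Fin.natAdd k i : ℕ) < k) := by simp [Fin.natAdd]
      rw [dif_neg hnot]
      exact congrArg B (Fin.ext (by simp [Fin.natAdd]))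
    induction j using Fin.cases with
    | zero =>
        simp only [Psys, Qsys, Fin.cases_zero, map_sum, _root_.map_mul,
          FreeAlgebra.lift_ι_apply, _root_.map_one]
        simp only [hL, hR]
        exact h1
    | succ i =>
        simp only [Psys, Qsys, Fin.cases_succ, _root_.map_mul, FreeAlgebra.lift_ι_apply]
        simp only [hL, hR]
        exact h2 i

/-- For `n, m ≥ 1`: a finite system of non-commutative polynomial equations over `ℕ` is
solvable in `M_n(ℕ)` if and only if it is solvable in `M_m(ℕ)`, for all systems, exactly
when `n = m`. -/
theorem stmt5 (n m : ℕ) (hn : 1 ≤ n) (hm : 1 ≤ m) :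
    (∀ (k s : ℕ) (P Q : Fin s → FreeAlgebra ℕ (Fin k)),
      (∃ X : Fin k → Matrix (Fin n) (Fin n) ℕ,
        ∀ j : Fin s, FreeAlgebra.lift ℕ X (P j) = FreeAlgebra.lift ℕ X (Q j)) ↔
      (∃ Y : Fin k → Matrix (Fin m) (Fin m) ℕ,
        ∀ j : Fin s, FreeAlgebra.lift ℕ Y (P j) = FreeAlgebra.lift ℕ Y (Q j)))
    ↔ n = m := by
  constructor
  · intro H
    have h1 : n ∣ m := by
      have := (H (n+n) (n+1) (Psys n) (Qsys n hn)).mp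
        ((system_iff n n hn hn).mpr dvd_rfl)
      exact (system_iff n m hn hm).mp this
    have h2 : m ∣ n := by
      have := (H (m+m) (m+1) (Psys m) (Qsys m hm)).mpr
        ((system_iff m m hm hm).mpr dvd_rfl)
      exact (system_iff m n hm hn).mp this
    exact Nat.dvd_antisymm h1 h2
  · rintro rfl
    intro k s P Q
    rfl
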